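/- Let n≥0, r≥0 and k≥1 be integers and β=(β_1,…,β_m) a weak composition of n. Then D^{inv}_{r;β,k}(q) = Σ_S q^{Σ_{i=min(S)+1}^{m}(β_i−χ_S(i))} · D^{inv+}_{r;β−χ_S,k−1}(q), where the sum is over all nonempty subsets S of {1,…,m} with χ_S ≤ β componentwise, χ_S∈{0,1}^m is the indicator vector of S, and β−χ_S is the componentwise difference. -/

import Mathlib

open scoped BigOperators

namespace omp

/-- The multiset `A(β) ∪ {0^r}`: the letter `i` (for `1 ≤ i ≤ m`) with multiplicity `β_i`,
together with `r` copies of the letter `0`. -/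
def content (r : ℕ) (β : List ℕ) : Multiset ℕ :=
  Multiset.replicate r 0 +
    ∑ i ∈ Finset.range β.length, Multiset.replicate (β.getD i 0) (i + 1)

/-- `π` is an ordered multiset partition of `A(β) ∪ {0^r}` into `k` (nonempty) blocks,
with `0` allowed anywhere: the set `OP^all_{r;β,k}`. -/
def IsOPall (r : ℕ) (β : List ℕ) (k : ℕ) (π : List (Finset ℕ)) : Prop :=
  π.length = k ∧ (∀ B ∈ π, B.Nonempty) ∧ (π.map Finset.val).sum = content r β

/-- Additionally, the last block does not contain `0`: the set `OP_{r;β,k}`. -/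
def IsOP (r : ℕ) (β : List ℕ) (k : ℕ) (π : List (Finset ℕ)) : Prop :=
  IsOPall r β k π ∧ 0 ∉ π.getLastD ∅

/-- Ordered multiset partitions of `A(β) ∪ {0^r}` with shape `α`: `OP^all_{r;β,α}`. -/
def IsOPallSh (r : ℕ) (β α : List ℕ) (π : List (Finset ℕ)) : Prop :=
  (∀ B ∈ π, B.Nonempty) ∧ (π.map Finset.val).sum = content r β ∧
    π.map Finset.card = α

/-- Shape `α` and last block avoiding `0`: `OP_{r;β,α}`. -/
def IsOPSh (r : ℕ) (β α : List ℕ) (π : List (Finset ℕ)) : Prop :=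
  IsOPallSh r β α π ∧ 0 ∉ π.getLastD ∅

/-- The `i`-th block (0-indexed). -/
def blk (π : List (Finset ℕ)) (i : ℕ) : Finset ℕ := π.getD i ∅

/-- `inv`: pairs of a letter `a` in block `B_i` and the minimum `b` of a later block `B_j`
with `a > b`. -/
def inv (π : List (Finset ℕ)) : ℕ :=
  ∑ i ∈ Finset.range π.length, ∑ j ∈ Finset.range π.length,
    if i < j then
      (@Finset.filter ℕ (fun (a : ℕ) => (blk π j).min < (a : WithBot ℕ))
        (fun _ => WithTop.decidableLT _ _) (blk π i)).card
    else 0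

/-- The word `σ(π)`: each block written in decreasing order, blocks concatenated. -/
def sigmaWord (π : List (Finset ℕ)) : List ℕ :=
  (π.map (fun B => (B.sort (· ≤ ·)).reverse)).flatten

/-- The word `ind(π) = 0^{|B_1|} 1^{|B_2|} ⋯ (k-1)^{|B_k|}`. -/
def indWord (π : List (Finset ℕ)) : List ℕ :=
  ((π.zipIdx.map Prod.swap).map (fun p => List.replicate p.2.card p.1)).flatten

/-- The major index of a word (positions are 1-based). -/
def majW (w : List ℕ) : ℕ :=
  ∑ i ∈ Finset.range (w.length - 1),
    if w.getD (i + 1) 0 < w.getD i 0 then i + 1 else 0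

/-- `maj(π)`: the sum of `ind(π)_{i+1}` over descents `σ_i > σ_{i+1}` of `σ(π)`. -/
def maj (π : List (Finset ℕ)) : ℕ :=
  ∑ i ∈ Finset.range ((sigmaWord π).length - 1),
    if (sigmaWord π).getD (i + 1) 0 < (sigmaWord π).getD i 0 then
      (indWord π).getD (i + 1) 0
    else 0

/-- `dinv(π)`: primary and secondary diagonal inversions, where `B_i^h` is the `h`-th smallest
element of block `B_i` (here `h` is 0-indexed). -/
def dinv (π : List (Finset ℕ)) : ℕ :=
  ∑ i ∈ Finset.range π.length, ∑ j ∈ Finset.range π.length,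
    if i < j then
      ((Finset.range (blk π i).card).filter (fun h =>
          h < (blk π j).card ∧
            ((blk π j).sort (· ≤ ·)).getD h 0 < ((blk π i).sort (· ≤ ·)).getD h 0)).card +
      ((Finset.range (blk π i).card).filter (fun h =>
          h + 1 < (blk π j).card ∧
            ((blk π j).sort (· ≤ ·)).getD (h + 1) 0 < ((blk π i).sort (· ≤ ·)).getD h 0)).card
    else 0

/-- `miniword(π)`, built from right to left: the last block in increasing order; inductively,
if the word built so far begins with `s`, block `B_i` contributes its elements greater than `s`
in increasing order followed by its elements at most `s` in increasing order. -/
def miniword : List (Finset ℕ) → List ℕ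
  | [] => []
  | B :: rest =>
    match miniword rest with
    | [] => B.sort (· ≤ ·)
    | s :: w =>
        ((B.filter (fun x => s < x)).sort (· ≤ ·) ++
          (B.filter (fun x => x ≤ s)).sort (· ≤ ·)) ++ s :: w

/-- `minimaj(π) = maj(miniword(π))`. -/
def minimaj (π : List (Finset ℕ)) : ℕ := majW (miniword π)

/-- `D^{stat}_{r;β,k}(q) = Σ_{π ∈ OP_{r;β,k}} q^{stat(π)}` (the set is finite, so the
finite-support sum below is the intended polynomial). -/
noncomputable def D (r : ℕ) (β : List ℕ) (k : ℕ)
    (stat : List (Finset ℕ) → ℕ) : Polynomial ℕ :=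
  ∑ᶠ π ∈ {π | IsOP r β k π}, Polynomial.X ^ stat π

/-- `D^{stat+}_{r;β,k}(q) = Σ_{π ∈ OP^all_{r;β,k}} q^{stat(π)}`. -/
noncomputable def Dall (r : ℕ) (β : List ℕ) (k : ℕ)
    (stat : List (Finset ℕ) → ℕ) : Polynomial ℕ :=
  ∑ᶠ π ∈ {π | IsOPall r β k π}, Polynomial.X ^ stat π

/-- `D^{stat}_{r;β,α}(q)`, the shape-refined generating function. -/
noncomputable def DSh (r : ℕ) (β α : List ℕ)
    (stat : List (Finset ℕ) → ℕ) : Polynomial ℕ :=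
  ∑ᶠ π ∈ {π | IsOPSh r β α π}, Polynomial.X ^ stat π

/-- `D^{stat+}_{r;β,α}(q)`, the shape-refined generating function with `0` allowed
in the last block. -/
noncomputable def DallSh (r : ℕ) (β α : List ℕ)
    (stat : List (Finset ℕ) → ℕ) : Polynomial ℕ :=
  ∑ᶠ π ∈ {π | IsOPallSh r β α π}, Polynomial.X ^ stat π

end omp


namespace omp

/-- The list `β − χ_S`: subtract `1` from `β_i` (1-indexed) for each `i ∈ S`. -/
def subInd (β : List ℕ) (S : Finset ℕ) : List ℕ :=
  (List.range β.length).map (fun i => β.getD i 0 - if i + 1 ∈ S then 1 else 0)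

/-- The exponent `Σ_{i = min(S)+1}^{m} (β_i − χ_S(i))`. -/
def wExp (β : List ℕ) (S : Finset ℕ) : ℕ :=
  ∑ i ∈ @Finset.filter ℕ (fun (i : ℕ) => S.min < (i : WithBot ℕ))
      (fun _ => WithTop.decidableLT _ _) (Finset.Icc 1 β.length),
    (β.getD (i - 1) 0 - if i ∈ S then 1 else 0)

end omp

namespace omp

lemma subInd_length (β : List ℕ) (S : Finset ℕ) : (subInd β S).length = β.length := by
  simp [subInd]

lemma subInd_getD (β : List ℕ) (S : Finset ℕ) {i : ℕ} (hi : i < β.length) :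
    (subInd β S).getD i 0 = β.getD i 0 - if i + 1 ∈ S then 1 else 0 := by
  rw [List.getD_eq_getElem _ _ (by simpa [subInd] using hi)]
  simp [subInd]

lemma count_content (r : ℕ) (β : List ℕ) (a : ℕ) :
    (content r β).count a =
      if a = 0 then r else if a - 1 < β.length then β.getD (a - 1) 0 else 0 := by
  unfold content
  rw [Multiset.count_add, Multiset.count_replicate, Multiset.count_sum']
  rcases eq_or_ne a 0 with rfl | ha
  · simp [Multiset.count_replicate]
  · obtain ⟨j, rfl⟩ := Nat.exists_eq_succ_of_ne_zero ha
    simp only [Multiset.count_replicate, Nat.succ_sub_one]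
    rw [if_neg (by omega), zero_add, if_neg ha]
    have h1 : ∀ i ∈ Finset.range β.length,
        (if i + 1 = j + 1 then β.getD i 0 else 0) = (if j = i then β.getD i 0 else 0) := by
      intro i _
      refine if_congr ?_ rfl rfl
      constructor <;> omega
    rw [Finset.sum_congr rfl h1, Finset.sum_ite_eq]
    simp

lemma countP_replicate (n : ℕ) (a : ℕ) (p : ℕ → Prop) [DecidablePred p] :
    (Multiset.replicate n a).countP p = if p a then n else 0 := by
  induction n with
  | zero => simp
  | succ n ih => rw [Multiset.replicate_succ, Multiset.countP_cons]; split <;> simp [ih, *]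

lemma countP_finset_sum (s : Finset ℕ) (f : ℕ → Multiset ℕ) (p : ℕ → Prop) [DecidablePred p] :
    (∑ i ∈ s, f i).countP p = ∑ i ∈ s, (f i).countP p := by
  classical
  induction s using Finset.induction with
  | empty => simp
  | insert _ _ h ih => rw [Finset.sum_insert h, Finset.sum_insert h, Multiset.countP_add, ih]

lemma countP_content (r : ℕ) (β : List ℕ) (p : ℕ → Prop) [DecidablePred p] :
    (content r β).countP p =
      (if p 0 then r else 0) +
        ∑ i ∈ Finset.range β.length, (if p (i + 1) then β.getD i 0 else 0) := by
  unfold content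
  rw [Multiset.countP_add, countP_finset_sum, countP_replicate]
  congr 1
  exact Finset.sum_congr rfl fun i _ => countP_replicate _ _ _

lemma count_finset_val {S : Finset ℕ} (a : ℕ) :
    S.val.count a = if a ∈ S then 1 else 0 := by
  split
  · exact Multiset.count_eq_one_of_mem S.nodup (by assumption)
  · exact Multiset.count_eq_zero.mpr (by assumption)

lemma content_subInd_add (r : ℕ) (β : List ℕ) (S : Finset ℕ)
    (hS : S ⊆ Finset.Icc 1 β.length) (hβ : ∀ i ∈ S, 1 ≤ β.getD (i - 1) 0) :
    content r (subInd β S) + S.val = content r β := by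
  ext a
  rw [Multiset.count_add, count_content, count_content, subInd_length, count_finset_val]
  rcases eq_or_ne a 0 with rfl | ha
  · have h0 : (0 : ℕ) ∉ S := fun h => by simpa using hS h
    simp [h0]
  · rw [if_neg ha, if_neg ha]
    have hmem : a ∈ S → 1 ≤ a ∧ a ≤ β.length := by
      intro h; simpa using hS h
    by_cases hm : a - 1 < β.length
    · have ha1 : a - 1 + 1 = a := Nat.succ_pred_eq_of_pos (Nat.pos_of_ne_zero ha)
      rw [if_pos hm, if_pos hm, subInd_getD _ _ hm]
      by_cases hin : a ∈ S
      · rw [if_pos (show a - 1 + 1 ∈ S from ha1.symm ▸ hin), if_pos hin]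
        have := hβ a hin
        omega
      · rw [if_neg (show a - 1 + 1 ∉ S from ha1.symm ▸ hin), if_neg hin]
        omega
    · rw [if_neg hm, if_neg hm]
      have hin : a ∉ S := fun h => hm (by have := hmem h; omega)
      rw [if_neg hin]

lemma min_lt_coe_iff {S : Finset ℕ} (h : S.Nonempty) (a : ℕ) :
    (S.min < (a : WithBot ℕ)) ↔ S.min' h < a := by
  rw [← Finset.coe_min' h]
  exact WithTop.coe_lt_coe

lemma countP_gt_min (r : ℕ) (β : List ℕ) (S : Finset ℕ) (hne : S.Nonempty)
    (hS : S ⊆ Finset.Icc 1 β.length) :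
    @Multiset.countP ℕ (fun (a : ℕ) => S.min < (a : WithBot ℕ)) (fun _ => WithTop.decidableLT _ _) (content r (subInd β S)) = wExp β S := by
  have hm0 : 1 ≤ S.min' hne := by
    have := hS (S.min'_mem hne); simp only [Finset.mem_Icc] at this; exact this.1
  rw [countP_content, subInd_length]
  rw [if_neg (by rw [min_lt_coe_iff hne]; omega)]
  rw [zero_add]
  unfold wExp
  rw [Finset.sum_filter]
  refine Finset.sum_nbij' (fun i => i + 1) (fun i => i - 1) ?_ ?_ ?_ ?_ ?_
  · intro i hi; simp only [Finset.mem_range] at hi; simp only [Finset.mem_Icc]; omega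
  · intro i hi; simp only [Finset.mem_Icc] at hi; simp only [Finset.mem_range]; omega
  · intro i _; omega
  · intro i hi; simp only [Finset.mem_Icc] at hi; omega
  · intro i hi
    simp only [Finset.mem_range] at hi
    rw [Nat.add_sub_cancel]
    by_cases hp : S.min < ((i + 1 : ℕ) : WithBot ℕ)
    · rw [if_pos hp, if_pos hp, subInd_getD _ _ hi]
    · rw [if_neg hp, if_neg hp]

lemma blk_append_lt (π : List (Finset ℕ)) (S : Finset ℕ) {i : ℕ} (h : i < π.length) :
    blk (π ++ [S]) i = blk π i := by
  unfold blk
  rw [List.getD_append _ _ _ _ h]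

lemma blk_append_last (π : List (Finset ℕ)) (S : Finset ℕ) :
    blk (π ++ [S]) π.length = S := by
  unfold blk
  rw [List.getD_append_right _ _ _ _ le_rfl]
  simp

lemma inv_concat (π : List (Finset ℕ)) (S : Finset ℕ) :
    inv (π ++ [S]) = inv π +
      ∑ i ∈ Finset.range π.length,
        (@Finset.filter ℕ (fun (a : ℕ) => S.min < (a : WithBot ℕ)) (fun _ => WithTop.decidableLT _ _) (blk π i)).card := by
  unfold inv
  rw [List.length_append, List.length_singleton]
  rw [Finset.sum_range_succ]
  have hlastrow : (∑ j ∈ Finset.range (π.length + 1),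
      if π.length < j then
        (@Finset.filter ℕ (fun (a : ℕ) => (blk (π ++ [S]) j).min < (a : WithBot ℕ))
          (fun _ => WithTop.decidableLT _ _) (blk (π ++ [S]) π.length)).card
      else 0) = 0 := by
    refine Finset.sum_eq_zero fun j hj => ?_
    rw [if_neg]
    simp only [Finset.mem_range] at hj
    omega
  rw [hlastrow, add_zero]
  have key : ∀ i ∈ Finset.range π.length,
      (∑ j ∈ Finset.range (π.length + 1),
        if i < j then
          (@Finset.filter ℕ (fun (a : ℕ) => (blk (π ++ [S]) j).min < (a : WithBot ℕ))
            (fun _ => WithTop.decidableLT _ _) (blk (π ++ [S]) i)).card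
        else 0)
      = (∑ j ∈ Finset.range π.length,
          if i < j then
            (@Finset.filter ℕ (fun (a : ℕ) => (blk π j).min < (a : WithBot ℕ)) (fun _ => WithTop.decidableLT _ _) (blk π i)).card
          else 0)
        + (@Finset.filter ℕ (fun (a : ℕ) => S.min < (a : WithBot ℕ)) (fun _ => WithTop.decidableLT _ _) (blk π i)).card := by
    intro i hi
    simp only [Finset.mem_range] at hi
    rw [Finset.sum_range_succ, blk_append_last, blk_append_lt _ _ hi, if_pos hi]
    congr 1
    refine Finset.sum_congr rfl fun j hj => ?_
    simp only [Finset.mem_range] at hj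
    rw [blk_append_lt _ _ hj]
  rw [Finset.sum_congr rfl key, Finset.sum_add_distrib]

lemma card_filter_eq_countP (B : Finset ℕ) (p : ℕ → Prop) [DecidablePred p] :
    (B.filter p).card = B.val.countP p := by
  rw [Finset.card, Finset.filter_val, Multiset.countP_eq_card_filter]

lemma sum_card_filter (π : List (Finset ℕ)) (p : ℕ → Prop) [DecidablePred p] :
    (∑ i ∈ Finset.range π.length, ((blk π i).filter p).card)
      = ((π.map Finset.val).sum).countP p := by
  induction π with
  | nil => simp
  | cons B rest ih =>
      rw [List.length_cons, Finset.sum_range_succ']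
      have h1 : ∀ i, blk (B :: rest) (i + 1) = blk rest i := fun i => rfl
      have h2 : blk (B :: rest) 0 = B := rfl
      simp only [h1, h2, ih, card_filter_eq_countP, List.map_cons, List.sum_cons,
        Multiset.countP_add]
      simp only [card_filter_eq_countP] at ih
      rw [ih, add_comm]

lemma mem_content_bounds (r : ℕ) (β : List ℕ) {a : ℕ} (ha : a ∈ content r β) (h0 : a ≠ 0) :
    1 ≤ a ∧ a ≤ β.length ∧ 1 ≤ β.getD (a - 1) 0 := by
  have := Multiset.count_pos.mpr ha
  rw [count_content, if_neg h0] at this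
  by_cases hm : a - 1 < β.length
  · rw [if_pos hm] at this
    exact ⟨Nat.pos_of_ne_zero h0, by omega, this⟩
  · rw [if_neg hm] at this; omega

/-- The splitting lemma. -/
lemma isOP_iff (r k : ℕ) (hk : 1 ≤ k) (β : List ℕ) (π : List (Finset ℕ)) :
    IsOP r β k π ↔ ∃ S π', π = π' ++ [S] ∧
      (S ⊆ Finset.Icc 1 β.length ∧ S.Nonempty ∧ (∀ i ∈ S, 1 ≤ β.getD (i - 1) 0)) ∧
      IsOPall r (subInd β S) (k - 1) π' := by
  constructor
  · rintro ⟨⟨hlen, hne, hsum⟩, h0⟩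
    have hnil : π ≠ [] := by intro h; rw [h] at hlen; simp at hlen; omega
    refine ⟨π.getLast hnil, π.dropLast, (List.dropLast_append_getLast hnil).symm, ?_, ?_⟩
    · set S := π.getLast hnil with hSdef
      have hmem : S ∈ π := List.getLast_mem hnil
      have hSne : S.Nonempty := hne S hmem
      have h0S : 0 ∉ S := by
        rwa [← List.dropLast_append_getLast hnil, List.getLastD_concat] at h0
      have hsub : S.val ≤ (π.map Finset.val).sum := by
        rw [← List.dropLast_append_getLast hnil, List.map_append, List.sum_append]
        simp only [List.map_cons, List.map_nil, List.sum_cons, List.sum_nil, add_zero]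
        exact le_add_self
      have hbounds : ∀ a ∈ S, 1 ≤ a ∧ a ≤ β.length ∧ 1 ≤ β.getD (a - 1) 0 := by
        intro a haS
        have : a ∈ content r β := by
          rw [← hsum]
          exact Multiset.mem_of_le hsub haS
        exact mem_content_bounds r β this (fun h => h0S (h ▸ haS))
      exact ⟨fun a haS => Finset.mem_Icc.mpr ⟨(hbounds a haS).1, (hbounds a haS).2.1⟩,
        hSne, fun a haS => (hbounds a haS).2.2⟩
    · set S := π.getLast hnil with hSdef
      have heq : π.dropLast ++ [S] = π := List.dropLast_append_getLast hnil
      have hmem : S ∈ π := List.getLast_mem hnil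
      have h0S : 0 ∉ S := by
        rwa [← heq, List.getLastD_concat] at h0
      have hbounds : ∀ a ∈ S, 1 ≤ a ∧ a ≤ β.length ∧ 1 ≤ β.getD (a - 1) 0 := by
        intro a haS
        have hsub : S.val ≤ (π.map Finset.val).sum := by
          rw [← heq, List.map_append, List.sum_append]
          simp only [List.map_cons, List.map_nil, List.sum_cons, List.sum_nil, add_zero]
          exact le_add_self
        have : a ∈ content r β := by
          rw [← hsum]; exact Multiset.mem_of_le hsub haS
        exact mem_content_bounds r β this (fun h => h0S (h ▸ haS))
      refine ⟨?_, ?_, ?_⟩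
      · have : π.dropLast.length = π.length - 1 := List.length_dropLast
        rw [hlen] at this; rw [this]
      · intro B hB
        exact hne B (List.mem_of_mem_dropLast hB)
      · have hadd : (π.dropLast.map Finset.val).sum + S.val = content r β := by
          rw [← hsum, ← heq]
          rw [List.map_append, List.sum_append]
          simp
        have hadd2 : content r (subInd β S) + S.val = content r β :=
          content_subInd_add r β S
            (fun a haS => Finset.mem_Icc.mpr ⟨(hbounds a haS).1, (hbounds a haS).2.1⟩)
            (fun a haS => (hbounds a haS).2.2)
        have := hadd.trans hadd2.symm
        exact add_right_cancel this
  · rintro ⟨S, π', rfl, ⟨hS, hSne, hβS⟩, hlen', hne', hsum'⟩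
    have h0S : 0 ∉ S := by
      intro h
      have := hS h
      simp at this
    constructor
    constructor
    · rw [List.length_append, List.length_singleton, hlen']
      omega
    constructor
    · intro B hB
      rcases List.mem_append.mp hB with h | h
      · exact hne' B h
      · simp only [List.mem_singleton] at h
        exact h ▸ hSne
    · rw [List.map_append, List.sum_append]
      simp only [List.map_cons, List.map_nil, List.sum_cons, List.sum_nil, add_zero]
      rw [hsum']
      exact content_subInd_add r β S hS hβS
    · rwa [List.getLastD_concat]

lemma inv_concat_eq (r k : ℕ) (β : List ℕ) (S : Finset ℕ) (π' : List (Finset ℕ))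
    (hS : S ⊆ Finset.Icc 1 β.length) (hSne : S.Nonempty)
    (hsum' : (π'.map Finset.val).sum = content r (subInd β S)) :
    inv (π' ++ [S]) = wExp β S + inv π' := by
  rw [inv_concat, sum_card_filter, hsum', countP_gt_min r β S hSne hS, add_comm]

lemma finite_isOPall (r : ℕ) (β : List ℕ) (k : ℕ) : {π | IsOPall r β k π}.Finite := by
  classical
  set T : Finset ℕ := (content r β).toFinset with hT
  set f : List (Finset ℕ) → (Fin k → {B : Finset ℕ // B ∈ T.powerset}) :=
    fun π i => ⟨(π.getD i ∅) ∩ T, Finset.mem_powerset.mpr Finset.inter_subset_right⟩ with hf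
  refine Set.Finite.of_finite_image (f := f) (Set.toFinite _) ?_
  intro π hπ π' hπ' heq
  obtain ⟨hlen, -, hsum⟩ := hπ
  obtain ⟨hlen', -, hsum'⟩ := hπ'
  have hsubset : ∀ (σ : List (Finset ℕ)), (σ.map Finset.val).sum = content r β →
      ∀ B ∈ σ, B ⊆ T := by
    intro σ hσ B hB a ha
    rw [hT, Multiset.mem_toFinset, ← hσ]
    have : B.val ≤ (σ.map Finset.val).sum :=
      List.le_sum_of_mem (List.mem_map_of_mem (f := Finset.val) hB)
    exact Multiset.mem_of_le this ha
  have hblocks := hsubset π hsum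
  have hblocks' := hsubset π' hsum'
  refine List.ext_getElem (by rw [hlen, hlen']) ?_
  intro i h1 h2
  have hik : i < k := by rwa [hlen] at h1
  have hfe := congrFun heq ⟨i, hik⟩
  simp only [hf, Subtype.mk.injEq] at hfe
  have e1 : π.getD i ∅ = π[i] := List.getD_eq_getElem π ∅ h1
  have e2 : π'.getD i ∅ = π'[i] := List.getD_eq_getElem π' ∅ h2
  rw [e1, e2] at hfe
  have m1 : π[i] ∩ T = π[i] := Finset.inter_eq_left.mpr (hblocks _ (List.getElem_mem h1))
  have m2 : π'[i] ∩ T = π'[i] := Finset.inter_eq_left.mpr (hblocks' _ (List.getElem_mem h2))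
  rw [m1, m2] at hfe
  exact hfe

end omp


/-- The recursion for `inv`:
`D^{inv}_{r;β,k} = Σ_S q^{Σ_{i=min(S)+1}^m (β_i − χ_S(i))} · D^{inv+}_{r;β−χ_S,k−1}`,
summed over nonempty `S ⊆ {1,…,m}` with `χ_S ≤ β`. -/
theorem inv_recursion (n r k : ℕ) (hk : 1 ≤ k) (β : List ℕ) (hβ : β.sum = n) :
    omp.D r β k omp.inv =
      ∑ S ∈ (Finset.Icc 1 β.length).powerset.filter
          (fun S => S.Nonempty ∧ ∀ i ∈ S, 1 ≤ β.getD (i - 1) 0),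
        Polynomial.X ^ omp.wExp β S *
          omp.Dall r (omp.subInd β S) (k - 1) omp.inv := by
    classical
  have hfinOP : {π | omp.IsOP r β k π}.Finite :=
    (omp.finite_isOPall r β k).subset (fun π h => h.1)
  rw [omp.D, finsum_mem_eq_finite_toFinset_sum _ hfinOP]
  have hDall : ∀ S : Finset ℕ, omp.Dall r (omp.subInd β S) (k - 1) omp.inv
      = ∑ π' ∈ (omp.finite_isOPall r (omp.subInd β S) (k - 1)).toFinset,
          Polynomial.X ^ omp.inv π' := fun S =>
    finsum_mem_eq_finite_toFinset_sum _ _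
  have step : ∀ S ∈ (Finset.Icc 1 β.length).powerset.filter
      (fun S => S.Nonempty ∧ ∀ i ∈ S, 1 ≤ β.getD (i - 1) 0),
      Polynomial.X ^ omp.wExp β S * omp.Dall r (omp.subInd β S) (k - 1) omp.inv
      = ∑ π' ∈ (omp.finite_isOPall r (omp.subInd β S) (k - 1)).toFinset,
          Polynomial.X ^ (omp.wExp β S + omp.inv π') := by
    intro S _
    rw [hDall S, Finset.mul_sum]
    exact Finset.sum_congr rfl fun π' _ => (pow_add _ _ _).symm
  rw [Finset.sum_congr rfl step, Finset.sum_sigma']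
  refine Finset.sum_nbij' (fun π => ⟨π.getLastD ∅, π.dropLast⟩)
    (fun p => p.2 ++ [p.1]) ?_ ?_ ?_ ?_ ?_
  · intro π hπ
    rw [Set.Finite.mem_toFinset] at hπ
    obtain ⟨S, π', rfl, ⟨hS, hSne, hβS⟩, hOPall⟩ := (omp.isOP_iff r k hk β _).mp hπ
    rw [Finset.mem_sigma]
    constructor
    · rw [List.getLastD_concat, Finset.mem_filter, Finset.mem_powerset]
      exact ⟨hS, hSne, hβS⟩
    · rw [List.getLastD_concat, List.dropLast_concat, Set.Finite.mem_toFinset]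
      exact hOPall
  · intro p hp
    rw [Finset.mem_sigma, Finset.mem_filter, Finset.mem_powerset,
      Set.Finite.mem_toFinset] at hp
    rw [Set.Finite.mem_toFinset]
    exact (omp.isOP_iff r k hk β _).mpr
      ⟨p.1, p.2, rfl, ⟨hp.1.1, hp.1.2.1, hp.1.2.2⟩, hp.2⟩
  · intro π hπ
    rw [Set.Finite.mem_toFinset] at hπ
    obtain ⟨S, π', rfl, -, -⟩ := (omp.isOP_iff r k hk β _).mp hπ
    dsimp only
    rw [List.getLastD_concat, List.dropLast_concat]
  · intro p hp
    rw [List.getLastD_concat, List.dropLast_concat]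
  · intro π hπ
    rw [Set.Finite.mem_toFinset] at hπ
    obtain ⟨S, π', rfl, ⟨hS, hSne, hβS⟩, hOPall⟩ := (omp.isOP_iff r k hk β _).mp hπ
    dsimp only
    rw [List.getLastD_concat, List.dropLast_concat]
    rw [omp.inv_concat_eq r k β S π' hS hSne hOPall.2.2]
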